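/- Let k be a field, n a natural number, and S = k[x₁,…,xₙ] the polynomial ring (MvPolynomial over Fin n) with its standard grading. Let R ⊆ S be a k-subalgebra and let ρ : S → S be a k-linear map such that: ρ(s) ∈ R for all s ∈ S; ρ(r) = r for all r ∈ R; ρ(r·s) = r·ρ(s) for all r ∈ R and s ∈ S; and ρ maps each homogeneous polynomial of degree d to a homogeneous polynomial of degree d. Then R is a finitely generated k-algebra. -/

import Mathlib

open MvPolynomial Finset

/-- Homogeneous component of a product with a homogeneous polynomial. -/
lemma hc_mul_homog {σ : Type*} {k : Type*} [CommSemiring k]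
    (t g : MvPolynomial σ k) {e d : ℕ} (ht : t.IsHomogeneous e) :
    homogeneousComponent d (t * g)
      = if e ≤ d then t * homogeneousComponent (d - e) g else 0 := by
  classical
  set N := g.totalDegree + 1 with hN
  have hg : t * g = ∑ j ∈ range N, t * homogeneousComponent j g := by
    rw [← Finset.mul_sum, sum_homogeneousComponent]
  rw [hg, map_sum]
  have hterm : ∀ j, homogeneousComponent d (t * homogeneousComponent j g)
      = if d = e + j then t * homogeneousComponent j g else 0 := by
    intro j
    exact homogeneousComponent_of_mem
      ((mem_homogeneousSubmodule _ _).2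
        (ht.mul (homogeneousComponent_isHomogeneous j g)))
  simp_rw [hterm]
  rcases le_or_gt e d with he | he
  · rw [if_pos he]
    have hcond : ∀ j : ℕ, (d = e + j) ↔ (j = d - e) := fun j => by omega
    simp_rw [hcond]
    rw [Finset.sum_ite_eq' (range N) (d - e) (fun j => t * homogeneousComponent j g)]
    by_cases hmem : d - e ∈ range N
    · rw [if_pos hmem]
    · rw [if_neg hmem]
      have : g.totalDegree < d - e := by
        simp only [Finset.mem_range, hN] at hmem; omega
      rw [homogeneousComponent_eq_zero _ _ this, mul_zero]
  · rw [if_neg (not_le.2 he)]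
    apply Finset.sum_eq_zero
    intro j _
    rw [if_neg (by omega)]

theorem hilbert_finiteness_via_reynolds (k : Type*) [Field k] (n : ℕ)
    (R : Subalgebra k (MvPolynomial (Fin n) k))
    (ρ : MvPolynomial (Fin n) k →ₗ[k] MvPolynomial (Fin n) k)
    (hρR : ∀ s : MvPolynomial (Fin n) k, ρ s ∈ R)
    (hρid : ∀ r ∈ R, ρ r = r)
    (hρlin : ∀ r ∈ R, ∀ s : MvPolynomial (Fin n) k, ρ (r * s) = r * ρ s)
    (hρhom : ∀ (d : ℕ) (s : MvPolynomial (Fin n) k),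
      s.IsHomogeneous d → (ρ s).IsHomogeneous d) :
    R.FG := by
  classical
  set S := MvPolynomial (Fin n) k
  -- Step 1: homogeneous components of elements of R lie in R.
  have hcomp : ∀ r ∈ R, ∀ d : ℕ, homogeneousComponent d r ∈ R := by
    intro r hr d
    by_cases hd : d ≤ r.totalDegree
    · have h2 : r = ∑ i ∈ range (r.totalDegree + 1),
          ρ (homogeneousComponent i r) := by
        conv_lhs => rw [← hρid r hr, ← sum_homogeneousComponent r, map_sum]
      have h3 : homogeneousComponent d r
          = ∑ i ∈ range (r.totalDegree + 1),
              homogeneousComponent d (ρ (homogeneousComponent i r)) := by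
        conv_lhs => rw [h2, map_sum]
      have h4 : ∀ i, homogeneousComponent d (ρ (homogeneousComponent i r))
          = if d = i then ρ (homogeneousComponent i r) else 0 := by
        intro i
        exact homogeneousComponent_of_mem
          ((mem_homogeneousSubmodule _ _).2
            (hρhom i _ (homogeneousComponent_isHomogeneous i r)))
      have h5 : homogeneousComponent d r = ρ (homogeneousComponent d r) := by
        conv_lhs => rw [h3]
        simp_rw [h4]
        simp_rw [show ∀ i : ℕ, (d = i) ↔ (i = d) from fun i => eq_comm]
        rw [Finset.sum_ite_eq' (range (r.totalDegree + 1)) d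
          (fun i => ρ (homogeneousComponent i r))]
        rw [if_pos (Finset.mem_range.2 (by omega))]
      rw [h5]; exact hρR _
    · rw [homogeneousComponent_eq_zero _ _ (by omega)]
      exact R.zero_mem
  -- Step 2: choose finite homogeneous generators of the ideal of positive-degree elements.
  set A : Set S := {p : S | p ∈ R ∧ ∃ e : ℕ, 0 < e ∧ p.IsHomogeneous e} with hA
  obtain ⟨G, hG⟩ := IsNoetherian.noetherian (Ideal.span A)
  have hGmem : ∀ g ∈ G, (g : S) ∈ Ideal.span A := by
    intro g hg; rw [← hG]; exact Ideal.subset_span hg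
  choose tset htsub htmem using
    fun (g : S) (hg : g ∈ G) => Submodule.mem_span_finite_of_mem_span (hGmem g hg)
  set T : Finset S := G.attach.biUnion (fun g => tset g.1 g.2) with hT
  have hTA : (T : Set S) ⊆ A := by
    intro x hx
    simp only [hT, Finset.coe_biUnion, Set.mem_iUnion] at hx
    obtain ⟨g, hg, hxg⟩ := hx
    exact htsub g.1 g.2 hxg
  have hspan : Ideal.span A ≤ Ideal.span (T : Set S) := by
    rw [← hG]
    apply Submodule.span_le.2
    intro g hg
    refine Submodule.span_mono ?_ (htmem g hg)
    intro x hx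
    exact Finset.coe_subset.2
      (Finset.subset_biUnion_of_mem (fun g : {x // x ∈ G} => tset g.1 g.2)
        (Finset.mem_attach G ⟨g, hg⟩)) hx
  -- Step 3: homogeneous elements of R lie in adjoin k T, by strong induction on degree.
  have main : ∀ d : ℕ, ∀ r : S, r ∈ R → r.IsHomogeneous d →
      r ∈ Algebra.adjoin k (T : Set S) := by
    intro d
    induction d using Nat.strong_induction_on with
    | _ d IH =>
      intro r hr hrhom
      rcases Nat.eq_zero_or_pos d with hd0 | hdpos
      · -- degree 0 : constant
        subst hd0
        have : homogeneousComponent 0 r = r := by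
          rw [homogeneousComponent_of_mem
            ((mem_homogeneousSubmodule _ _).2 hrhom), if_pos rfl]
        rw [← this, homogeneousComponent_zero]
        exact Subalgebra.algebraMap_mem _ _
      · -- positive degree
        have hrA : r ∈ Ideal.span (T : Set S) :=
          hspan (Ideal.subset_span ⟨hr, d, hdpos, hrhom⟩)
        obtain ⟨f, -, hf⟩ := Submodule.mem_span_finset.1 hrA
        have hρr : r = ∑ t ∈ T, t * ρ (f t) := by
          have h1 : r = ρ r := (hρid r hr).symm
          have h2 : ρ r = ∑ t ∈ T, ρ (t * f t) := by
            conv_lhs => rw [← hf]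
            rw [map_sum]
            exact Finset.sum_congr rfl fun t _ => by rw [smul_eq_mul, mul_comm]
          rw [h1, h2]
          exact Finset.sum_congr rfl fun t ht => hρlin t (hTA ht).1 (f t)
        have hrd : r = ∑ t ∈ T, homogeneousComponent d (t * ρ (f t)) := by
          conv_lhs => rw [show r = homogeneousComponent d r from
            (by rw [homogeneousComponent_of_mem
              ((mem_homogeneousSubmodule _ _).2 hrhom), if_pos rfl]),
            hρr, map_sum]
        rw [hrd]
        apply Subalgebra.sum_mem
        intro t ht
        obtain ⟨htR, e, hepos, hte⟩ := hTA ht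
        rw [hc_mul_homog t (ρ (f t)) hte]
        by_cases hed : e ≤ d
        · rw [if_pos hed]
          refine mul_mem (Algebra.subset_adjoin ht) ?_
          exact IH (d - e) (by omega) _ (hcomp _ (hρR (f t)) (d - e))
            (homogeneousComponent_isHomogeneous (d - e) (ρ (f t)))
        · rw [if_neg hed]; exact Subalgebra.zero_mem _
  -- Step 4: conclude R = adjoin k T.
  rw [Subalgebra.fg_def]
  refine ⟨(T : Set S), T.finite_toSet, le_antisymm ?_ ?_⟩
  · rw [Algebra.adjoin_le_iff]
    intro x hx
    exact (hTA hx).1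
  · intro r hr
    rw [← sum_homogeneousComponent r]
    exact Subalgebra.sum_mem _ fun i _ =>
      main i _ (hcomp r hr i) (homogeneousComponent_isHomogeneous i r)
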